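/- Suppose Γ is bipartite with parts V_1 and V_2, and α, β are the two nontrivial cubic roots of unity in an algebraically closed field K of characteristic zero. Then the linear map f defined by f(e_i) = α e_i for i ∈ V_1 and f(e_i) = β e_i for i ∈ V_2 is an algebra automorphism of A_Γ. -/

import Mathlib

/-- The evolution algebra product of the graph `G`: basis vectors multiply by
`e_i · e_j = 0` for `i ≠ j` and `e_i ^ 2 = ∑_{ℓ ∈ N(i)} e_ℓ`. -/
def evMul {V K : Type*} [Fintype V] [Field K] (G : SimpleGraph V) [DecidableRel G.Adj]
    (x y : V → K) : V → K :=
  fun m => ∑ i, x i * y i * (if G.Adj i m then 1 else 0)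

/-- `f` is an algebra automorphism of the evolution algebra of `G`. -/
def IsEvAut {V K : Type*} [Fintype V] [Field K] (G : SimpleGraph V) [DecidableRel G.Adj]
    (f : (V → K) → (V → K)) : Prop :=
  Function.Bijective f ∧ IsLinearMap K f ∧ ∀ x y, f (evMul G x y) = evMul G (f x) (f y)

/-- If `Γ` is bipartite with parts `V₁`, `V₂ = V₁ᶜ` and `α, β` are the two nontrivial
cubic roots of unity, then `e_i ↦ α e_i` (`i ∈ V₁`), `e_i ↦ β e_i` (`i ∉ V₁`) is an
algebra automorphism of `A_Γ`. -/
theorem bipartite_diag_aut {V K : Type*} [Fintype V] [DecidableEq V] [Field K] [CharZero K]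
    [IsAlgClosed K]
    (G : SimpleGraph V) [DecidableRel G.Adj] (hconn : G.Connected)
    (V₁ : Set V) [DecidablePred (· ∈ V₁)]
    (hbip : ∀ i j, G.Adj i j → (i ∈ V₁ ↔ j ∉ V₁))
    (α β : K) (hα3 : α ^ 3 = 1) (hβ3 : β ^ 3 = 1) (hα1 : α ≠ 1) (hβ1 : β ≠ 1) (hαβ : α ≠ β) :
    IsEvAut G (fun x m => (if m ∈ V₁ then α else β) * x m) := by
  have hα0 : α ≠ 0 := by
    intro h; rw [h] at hα3; norm_num at hα3
  have hβ0 : β ≠ 0 := by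
    intro h; rw [h] at hβ3; norm_num at hβ3
  have hqα : α ^ 2 + α + 1 = 0 := by
    have h : (α - 1) * (α ^ 2 + α + 1) = 0 := by linear_combination hα3
    rcases mul_eq_zero.mp h with h | h
    · exact absurd (sub_eq_zero.mp h) hα1
    · exact h
  have hqβ : β ^ 2 + β + 1 = 0 := by
    have h : (β - 1) * (β ^ 2 + β + 1) = 0 := by linear_combination hβ3
    rcases mul_eq_zero.mp h with h | h
    · exact absurd (sub_eq_zero.mp h) hβ1
    · exact h
  have hsum : α + β + 1 = 0 := by
    have h : (α - β) * (α + β + 1) = 0 := by linear_combination hqα - hqβ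
    rcases mul_eq_zero.mp h with h | h
    · exact absurd (sub_eq_zero.mp h) hαβ
    · exact h
  have hβα : α ^ 2 = β := by linear_combination hqα - hsum
  have hαβ2 : β ^ 2 = α := by linear_combination hqβ - hsum
  set c : V → K := fun m => if m ∈ V₁ then α else β with hc
  have hc0 : ∀ m, c m ≠ 0 := by
    intro m; by_cases h : m ∈ V₁ <;> simp [hc, h, hα0, hβ0]
  have hkey : ∀ i m, G.Adj i m → c i * c i = c m := by
    intro i m hadj
    have := hbip i m hadj
    by_cases h : i ∈ V₁
    · have hm : m ∉ V₁ := this.mp h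
      simp only [hc, if_pos h, if_neg hm]
      linear_combination hβα
    · have hm : m ∈ V₁ := by by_contra hm; exact h (this.mpr hm)
      simp only [hc, if_neg h, if_pos hm]
      linear_combination hαβ2
  refine ⟨?_, ⟨fun x y => by funext m; simp [mul_add], fun a x => by
      funext m; simp [smul_eq_mul]; ring⟩, ?_⟩
  · refine Function.bijective_iff_has_inverse.mpr ⟨fun x m => (c m)⁻¹ * x m, ?_, ?_⟩
    · intro x; funext m; by_cases h : m ∈ V₁ <;> simp [hc, h, hα0, hβ0]
    · intro x; funext m; by_cases h : m ∈ V₁ <;> simp [hc, h, hα0, hβ0]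
  · intro x y
    funext m
    simp only [evMul]
    rw [Finset.mul_sum]
    apply Finset.sum_congr rfl
    intro i _
    by_cases h : G.Adj i m
    · simp only [if_pos h, mul_one]
      by_cases hi : i ∈ V₁
      · have hm : m ∉ V₁ := (hbip i m h).mp hi
        simp only [if_pos hi, if_neg hm]
        linear_combination (-(x i * y i)) * hβα
      · have hm : m ∈ V₁ := by
          by_contra hm; exact hi ((hbip i m h).mpr hm)
        simp only [if_neg hi, if_pos hm]
        linear_combination (-(x i * y i)) * hαβ2
    · simp [if_neg h]
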